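/- arXiv:1910.10868 — 5 statements merged into one kernel-verified Lean document; each statement's English description precedes it below -/
import Mathlib

section
/- Let (Ω, F, ℙ) be a probability space, M ≥ 0 a constant, and U : Ω → [0,1] a random variable such that ℙ(U ≤ t) ≤ M·t for every t ∈ [0,1]. Let G : [0,1] → (0,∞) be a non-increasing function and let c > 0. Then E[ 1{U ≤ c·G(U)} / G(U) ] ≤ c·M, where 1{·} denotes the indicator function. -/
open MeasureTheory

lemma aux_indicator_int {Ω : Type*} [MeasurableSpace Ω] (ℙ : Measure Ω) [IsProbabilityMeasure ℙ]
    (f : Ω → ℝ) (hf : ∀ ω, 0 ≤ f ω) (s : Set Ω) (hs : MeasurableSet s) (K : ℝ)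
    (hle : ∀ ω, f ω ≤ s.indicator (fun _ => K) ω) :
    ∫ ω, f ω ∂ℙ ≤ (ℙ s).toReal * K := by
  have hint : Integrable (s.indicator (fun _ => K)) ℙ := (integrable_const K).indicator hs
  calc ∫ ω, f ω ∂ℙ ≤ ∫ ω, s.indicator (fun _ => K) ω ∂ℙ :=
        integral_mono_of_nonneg (Filter.Eventually.of_forall hf) hint
          (Filter.Eventually.of_forall hle)
    _ = (ℙ s).toReal * K := by
        rw [integral_indicator_const K hs]; simp [smul_eq_mul, measureReal_def]

/-- Extension of Lemma 3.2 of Blanchard and Roquain (2008): if `U` is a `[0,1]`-valued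
random variable with `ℙ(U ≤ t) ≤ M·t` for `t ∈ [0,1]`, `G` is a positive non-increasing
function on `[0,1]`, and `c > 0`, then `E[1{U ≤ c·G(U)}/G(U)] ≤ c·M`. -/
theorem fdr_indicator_bound
    {Ω : Type*} [MeasurableSpace Ω] (ℙ : Measure Ω) [IsProbabilityMeasure ℙ]
    (M : ℝ) (hM : 0 ≤ M)
    (U : Ω → ℝ) (hUmeas : Measurable U) (hU01 : ∀ ω, U ω ∈ Set.Icc (0 : ℝ) 1)
    (hcdf : ∀ t ∈ Set.Icc (0 : ℝ) 1, (ℙ {ω | U ω ≤ t}).toReal ≤ M * t)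
    (G : ℝ → ℝ) (hGpos : ∀ u ∈ Set.Icc (0 : ℝ) 1, 0 < G u)
    (hGanti : AntitoneOn G (Set.Icc (0 : ℝ) 1))
    (c : ℝ) (hc : 0 < c) :
    ∫ ω, (if U ω ≤ c * G (U ω) then (G (U ω))⁻¹ else 0) ∂ℙ ≤ c * M := by
  set S : Set ℝ := {u | u ∈ Set.Icc (0 : ℝ) 1 ∧ u ≤ c * G u} with hS
  have h0S : (0 : ℝ) ∈ S := by
    refine ⟨⟨le_refl 0, zero_le_one⟩, ?_⟩
    exact le_of_lt (mul_pos hc (hGpos 0 ⟨le_refl 0, zero_le_one⟩))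
  have hbdd : BddAbove S := ⟨1, fun u hu => hu.1.2⟩
  set t := sSup S with ht
  have ht0 : 0 ≤ t := le_csSup hbdd h0S
  have ht1 : t ≤ 1 := csSup_le ⟨0, h0S⟩ (fun u hu => hu.1.2)
  have htIcc : t ∈ Set.Icc (0 : ℝ) 1 := ⟨ht0, ht1⟩
  have hmemS : ∀ ω, U ω ≤ c * G (U ω) → U ω ∈ S := fun ω h => ⟨hU01 ω, h⟩
  have hUle : ∀ ω, U ω ≤ c * G (U ω) → U ω ≤ t := fun ω h => le_csSup hbdd (hmemS ω h)
  have hf0 : ∀ ω, 0 ≤ (if U ω ≤ c * G (U ω) then (G (U ω))⁻¹ else 0) := by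
    intro ω
    split
    · exact le_of_lt (inv_pos.mpr (hGpos _ (hU01 ω)))
    · exact le_refl 0
  have hsmeas : MeasurableSet {ω | U ω ≤ t} := hUmeas measurableSet_Iic
  rcases eq_or_lt_of_le ht0 with htz | htpos
  · -- t = 0
    have hle : ∀ ω, (if U ω ≤ c * G (U ω) then (G (U ω))⁻¹ else 0)
        ≤ Set.indicator {ω | U ω ≤ t} (fun _ => (G 0)⁻¹) ω := by
      intro ω
      by_cases h : U ω ≤ c * G (U ω)
      · have hut : U ω ≤ t := hUle ω h
        have hu0 : U ω = 0 := le_antisymm (htz ▸ hut) (hU01 ω).1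
        rw [Set.indicator_of_mem (by exact hut)]
        simp only [hu0, if_pos (hu0 ▸ h)]; exact le_refl _
      · simp only [if_neg h]
        by_cases hm : ω ∈ {ω | U ω ≤ t}
        · rw [Set.indicator_of_mem hm]
          exact le_of_lt (inv_pos.mpr (hGpos 0 ⟨le_refl 0, zero_le_one⟩))
        · rw [Set.indicator_of_notMem hm]
    calc ∫ ω, (if U ω ≤ c * G (U ω) then (G (U ω))⁻¹ else 0) ∂ℙ
        ≤ (ℙ {ω | U ω ≤ t}).toReal * (G 0)⁻¹ :=
          aux_indicator_int ℙ _ hf0 _ hsmeas _ hle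
      _ ≤ (M * t) * (G 0)⁻¹ := by
          apply mul_le_mul_of_nonneg_right (hcdf t htIcc)
          exact le_of_lt (inv_pos.mpr (hGpos 0 ⟨le_refl 0, zero_le_one⟩))
      _ = 0 := by rw [← htz]; ring
      _ ≤ c * M := mul_nonneg hc.le hM
  · -- t > 0
    have hkey : ∀ u ∈ S, t ≤ c * G u := by
      intro u hu
      apply csSup_le ⟨0, h0S⟩
      intro s hs
      rcases le_or_gt s u with hsu | hus
      · exact hsu.trans hu.2
      · exact hs.2.trans (mul_le_mul_of_nonneg_left (hGanti hu.1 hs.1 hus.le) hc.le)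
    have hle : ∀ ω, (if U ω ≤ c * G (U ω) then (G (U ω))⁻¹ else 0)
        ≤ Set.indicator {ω | U ω ≤ t} (fun _ => c / t) ω := by
      intro ω
      have hct : 0 ≤ c / t := div_nonneg hc.le ht0
      by_cases h : U ω ≤ c * G (U ω)
      · have hut : U ω ≤ t := hUle ω h
        rw [Set.indicator_of_mem (by exact hut), if_pos h]
        have hGu : 0 < G (U ω) := hGpos _ (hU01 ω)
        have h1 : t / c ≤ G (U ω) := (div_le_iff₀' hc).mpr (hkey _ (hmemS ω h))
        have h2 : (G (U ω))⁻¹ ≤ (t / c)⁻¹ :=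
          inv_anti₀ (div_pos htpos hc) h1
        rwa [inv_div] at h2
      · simp only [if_neg h]
        by_cases hm : ω ∈ {ω | U ω ≤ t}
        · rw [Set.indicator_of_mem hm]; exact hct
        · rw [Set.indicator_of_notMem hm]
    calc ∫ ω, (if U ω ≤ c * G (U ω) then (G (U ω))⁻¹ else 0) ∂ℙ
        ≤ (ℙ {ω | U ω ≤ t}).toReal * (c / t) :=
          aux_indicator_int ℙ _ hf0 _ hsmeas _ hle
      _ ≤ (M * t) * (c / t) :=
          mul_le_mul_of_nonneg_right (hcdf t htIcc) (div_nonneg hc.le ht0)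
      _ = c * M := by field_simp
end

section
/- Let B₁, …, B_n be independent random variables on a probability space, each taking values in {0,1}, let S ⊆ {1,…,n}, and suppose there exists P₀ > 0 such that ℙ(B_k = 0) = P₀ for every k ∈ S. Set R = Σ_{i=1}^n B_i and, for each k, R^{(−k)} = R − B_k (so that R^{(−k)} ∈ {0,1,…,n−1} and n − R^{(−k)} ≥ 1). Then for every function h : {0,1,…,n} → [0,∞), Σ_{k∈S} E[ h(R^{(−k)}) / (n − R^{(−k)}) ] ≤ (1/P₀) · E[ h(R) ]. -/
open MeasureTheory

/-- Any real-valued function of a measurable ℕ-valued random variable bounded by `n`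
is integrable on a probability space. -/
lemma integrable_comp_nat_bounded {Ω : Type*} [MeasurableSpace Ω] (ℙ : Measure Ω)
    [IsProbabilityMeasure ℙ] (X : Ω → ℕ) (hX : Measurable X) (n : ℕ)
    (hXn : ∀ ω, X ω ≤ n) (g : ℕ → ℝ) :
    Integrable (fun ω => g (X ω)) ℙ := by
  have hgm : Measurable g := measurable_from_top
  have hm : AEStronglyMeasurable (fun ω => g (X ω)) ℙ :=
    ((hgm.comp hX).aestronglyMeasurable)
  refine (integrable_const (∑ r ∈ Finset.range (n + 1), ‖g r‖)).mono' hm ?_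
  filter_upwards with ω
  have hmem : X ω ∈ Finset.range (n + 1) := Finset.mem_range.2 (Nat.lt_succ_of_le (hXn ω))
  exact Finset.single_le_sum (fun r _ => norm_nonneg (g r)) hmem

/-- Abstract form of the paper's Lemma 1 (extending Lemma 1 of Nandi and Sarkar (2018)):
for independent `{0,1}`-valued random variables `B₁,…,Bₙ` with `ℙ(B_k = 0) = P₀ > 0` for
`k ∈ S`, `R = Σ Bᵢ` and `R⁽⁻ᵏ⁾ = R − B_k`, one has, for any nonnegative `h`,
`Σ_{k∈S} E[h(R⁽⁻ᵏ⁾)/(n − R⁽⁻ᵏ⁾)] ≤ (1/P₀)·E[h(R)]`. -/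
theorem leave_one_out_expectation_bound
    {Ω : Type*} [MeasurableSpace Ω] (ℙ : Measure Ω) [IsProbabilityMeasure ℙ]
    (n : ℕ) (B : Fin n → Ω → ℕ)
    (hmeas : ∀ i, Measurable (B i))
    (hval : ∀ i ω, B i ω = 0 ∨ B i ω = 1)
    (hindep : ProbabilityTheory.iIndepFun B ℙ)
    (S : Finset (Fin n)) (P₀ : ℝ) (hP₀ : 0 < P₀)
    (hnull : ∀ k ∈ S, (ℙ {ω | B k ω = 0}).toReal = P₀)
    (h : ℕ → ℝ) (hh : ∀ r, 0 ≤ h r) :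
    ∑ k ∈ S, ∫ ω, h ((∑ i, B i ω) - B k ω) / ((n : ℝ) - (((∑ i, B i ω) - B k ω : ℕ) : ℝ)) ∂ℙ
      ≤ (1 / P₀) * ∫ ω, h (∑ i, B i ω) ∂ℙ := by
  classical
  set R : Ω → ℕ := fun ω => ∑ i, B i ω with hR
  set T : Fin n → Ω → ℕ := fun k ω => ∑ i ∈ Finset.univ.erase k, B i ω with hT
  have hBle : ∀ i ω, B i ω ≤ 1 := fun i ω => by rcases hval i ω with h0 | h1 <;> omega
  have hsplit : ∀ k ω, R ω = B k ω + T k ω := by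
    intro k ω
    exact (Finset.add_sum_erase _ _ (Finset.mem_univ k)).symm
  have hsub : ∀ k ω, R ω - B k ω = T k ω := by
    intro k ω; rw [hsplit k ω]; omega
  have hRle : ∀ ω, R ω ≤ n := by
    intro ω
    calc R ω ≤ ∑ _i : Fin n, 1 := Finset.sum_le_sum fun i _ => hBle i ω
    _ = n := by simp
  have hTle : ∀ k ω, T k ω ≤ n := by
    intro k ω
    calc T k ω ≤ R ω := by rw [hsplit k ω]; omega
    _ ≤ n := hRle ω
  have hRmeas : Measurable R := Finset.measurable_sum _ fun i _ => hmeas i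
  have hTmeas : ∀ k, Measurable (T k) := fun k =>
    Finset.measurable_sum _ fun i _ => hmeas i
  -- the key functions
  set φ : ℕ → ℝ := fun r => h r / ((n : ℝ) - r) with hφ
  set ψ : ℕ → ℝ := fun b => if b = 0 then 1 else 0 with hψ
  -- integrabilities
  have hint_hR : Integrable (fun ω => h (R ω)) ℙ :=
    integrable_comp_nat_bounded ℙ R hRmeas n hRle h
  have hint_φT : ∀ k, Integrable (fun ω => φ (T k ω)) ℙ := fun k =>
    integrable_comp_nat_bounded ℙ (T k) (hTmeas k) n (hTle k) φ
  have hint_φR : Integrable (fun ω => φ (R ω)) ℙ :=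
    integrable_comp_nat_bounded ℙ R hRmeas n hRle φ
  have hψmeas : ∀ k, Measurable (fun ω => ψ (B k ω)) := fun k => by
    exact (measurable_from_top (f := ψ)).comp (hmeas k)
  have hint_ψφ : ∀ k, Integrable (fun ω => ψ (B k ω) * φ (R ω)) ℙ := by
    intro k
    refine Integrable.bdd_mul (c := 1) hint_φR (hψmeas k).aestronglyMeasurable (Filter.Eventually.of_forall fun ω => ?_)
    simp only [hψ]
    split <;> simp
  -- step 1 : for each k ∈ S, the leave-one-out expectation equals (1/P₀)·E[ψ(B k)·φ(R)]
  have step1 : ∀ k ∈ S,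
      (∫ ω, φ (T k ω) ∂ℙ) = (1 / P₀) * ∫ ω, ψ (B k ω) * φ (R ω) ∂ℙ := by
    intro k hk
    have hindepk : ProbabilityTheory.IndepFun (T k) (B k) ℙ := by
      have := hindep.indepFun_finsetSum_of_notMem hmeas
        (Finset.notMem_erase k Finset.univ)
      have heq : (∑ j ∈ Finset.univ.erase k, B j) = T k := by
        funext ω; simp [hT, Finset.sum_apply]
      rwa [heq] at this
    have hindep2 : ProbabilityTheory.IndepFun (fun ω => φ (T k ω)) (fun ω => ψ (B k ω)) ℙ :=
      hindepk.comp (measurable_from_top (f := φ)) (measurable_from_top (f := ψ))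
    have hmul : (∫ ω, φ (T k ω) * ψ (B k ω) ∂ℙ)
        = (∫ ω, φ (T k ω) ∂ℙ) * ∫ ω, ψ (B k ω) ∂ℙ :=
      by have := hindep2.integral_mul_eq_mul_integral (hint_φT k).aestronglyMeasurable
          (hψmeas k).aestronglyMeasurable
         exact this
    have hψint : (∫ ω, ψ (B k ω) ∂ℙ) = P₀ := by
      have hset : MeasurableSet {ω | B k ω = 0} := (hmeas k) (measurableSet_singleton 0)
      have : (fun ω => ψ (B k ω)) = Set.indicator {ω | B k ω = 0} 1 := by
        funext ω
        by_cases h0 : B k ω = 0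
        · simp [hψ, h0, Set.indicator_of_mem, Set.mem_setOf_eq]
        · simp [hψ, h0, Set.indicator_of_notMem, Set.mem_setOf_eq]
      rw [this, integral_indicator_one hset, measureReal_def, hnull k hk]
    have hptw : ∀ ω, φ (T k ω) * ψ (B k ω) = ψ (B k ω) * φ (R ω) := by
      intro ω
      by_cases h0 : B k ω = 0
      · have : T k ω = R ω := by rw [hsplit k ω, h0, zero_add]
        rw [this, mul_comm]
      · simp [hψ, h0]
    have : (∫ ω, ψ (B k ω) * φ (R ω) ∂ℙ) = (∫ ω, φ (T k ω) ∂ℙ) * P₀ := by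
      rw [← hψint, ← hmul]
      exact integral_congr_ae (Filter.Eventually.of_forall fun ω => (hptw ω).symm)
    rw [this]
    field_simp
  -- pointwise bound : Σ_{k∈S} ψ(B k ω)·φ(R ω) ≤ h(R ω)
  have step2 : ∀ ω, (∑ k ∈ S, ψ (B k ω) * φ (R ω)) ≤ h (R ω) := by
    intro ω
    rw [← Finset.sum_mul]
    by_cases hRn : R ω = n
    · -- all B i ω = 1, so every ψ term vanishes
      have hall : ∀ i, B i ω = 1 := by
        by_contra hcon
        push_neg at hcon
        obtain ⟨j, hj⟩ := hcon
        have hj0 : B j ω = 0 := by rcases hval j ω with h0 | h1 <;> omega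
        have : R ω < ∑ _i : Fin n, 1 := by
          apply Finset.sum_lt_sum (fun i _ => hBle i ω)
          exact ⟨j, Finset.mem_univ j, by omega⟩
        simp at this
        omega
      have : (∑ k ∈ S, ψ (B k ω)) = 0 :=
        Finset.sum_eq_zero fun k _ => by simp [hψ, hall k]
      rw [this, zero_mul]
      exact hh _
    · have hRlt : R ω < n := lt_of_le_of_ne (hRle ω) hRn
      have hden : (0 : ℝ) < (n : ℝ) - R ω := by
        exact sub_pos.2 (by exact_mod_cast hRlt)
      have hφnn : 0 ≤ φ (R ω) := div_nonneg (hh _) hden.le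
      have hsum_le : (∑ k ∈ S, ψ (B k ω)) ≤ (n : ℝ) - R ω := by
        have h1 : ∀ i, ψ (B i ω) = 1 - (B i ω : ℝ) := by
          intro i
          rcases hval i ω with h0 | h1
          · simp [hψ, h0]
          · simp [hψ, h1]
        calc (∑ k ∈ S, ψ (B k ω)) ≤ ∑ k : Fin n, ψ (B k ω) := by
              apply Finset.sum_le_sum_of_subset_of_nonneg (Finset.subset_univ S)
              intro i _ _
              simp only [hψ]; split <;> norm_num
          _ = ∑ k : Fin n, (1 - (B k ω : ℝ)) := Finset.sum_congr rfl fun i _ => h1 i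
          _ = (n : ℝ) - R ω := by
              rw [Finset.sum_sub_distrib]
              push_cast [hR]
              simp
      calc (∑ k ∈ S, ψ (B k ω)) * φ (R ω) ≤ ((n : ℝ) - R ω) * φ (R ω) :=
            mul_le_mul_of_nonneg_right hsum_le hφnn
        _ = h (R ω) := by
            rw [hφ]
            field_simp
  -- put everything together
  have hLHS : (∑ k ∈ S, ∫ ω, h ((∑ i, B i ω) - B k ω)
        / ((n : ℝ) - (((∑ i, B i ω) - B k ω : ℕ) : ℝ)) ∂ℙ)
      = ∑ k ∈ S, ∫ ω, φ (T k ω) ∂ℙ := by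
    refine Finset.sum_congr rfl fun k _ => ?_
    refine integral_congr_ae (Filter.Eventually.of_forall fun ω => ?_)
    show h (R ω - B k ω) / ((n : ℝ) - ((R ω - B k ω : ℕ) : ℝ)) = φ (T k ω)
    rw [hsub k ω]
  rw [hLHS]
  calc (∑ k ∈ S, ∫ ω, φ (T k ω) ∂ℙ)
      = ∑ k ∈ S, (1 / P₀) * ∫ ω, ψ (B k ω) * φ (R ω) ∂ℙ :=
        Finset.sum_congr rfl step1
    _ = (1 / P₀) * ∑ k ∈ S, ∫ ω, ψ (B k ω) * φ (R ω) ∂ℙ := by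
        rw [Finset.mul_sum]
    _ = (1 / P₀) * ∫ ω, ∑ k ∈ S, ψ (B k ω) * φ (R ω) ∂ℙ := by
        rw [integral_finset_sum S fun k _ => hint_ψφ k]
    _ ≤ (1 / P₀) * ∫ ω, h (R ω) ∂ℙ := by
        apply mul_le_mul_of_nonneg_left _ (by positivity)
        exact integral_mono (integrable_finset_sum S fun k _ => hint_ψφ k) hint_hR step2
end

section
/- For every x ≥ 0, 1 − Φ(x) > 2·φ(x) / (√(4 + x²) + x). -/
open MeasureTheory

/-- The standard normal cumulative distribution function. -/
noncomputable def Phi (x : ℝ) : ℝ :=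
  (ProbabilityTheory.gaussianReal 0 1 (Set.Iic x)).toReal

/-- The standard normal density. -/
noncomputable def phi (x : ℝ) : ℝ :=
  Real.exp (-x ^ 2 / 2) / Real.sqrt (2 * Real.pi)

open Real Filter Set ProbabilityTheory

lemma gaussianPDFReal_eq_phi : gaussianPDFReal 0 1 = phi := by
  funext t
  simp [gaussianPDFReal, phi, sub_zero, div_eq_inv_mul, mul_comm]

lemma phi_pos (x : ℝ) : 0 < phi x :=
  div_pos (Real.exp_pos _) (Real.sqrt_pos.2 (by positivity))

lemma phi_continuous : Continuous phi := by
  unfold phi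
  fun_prop

lemma phi_integrable : Integrable phi := by
  rw [← gaussianPDFReal_eq_phi]
  exact integrable_gaussianPDFReal 0 1

lemma Phi_eq (y : ℝ) : Phi y = ∫ t in Set.Iic y, phi t := by
  rw [Phi, gaussianReal_apply_eq_integral 0 one_ne_zero, gaussianPDFReal_eq_phi,
    ENNReal.toReal_ofReal]
  exact setIntegral_nonneg measurableSet_Iic fun t _ => (phi_pos t).le

lemma Phi_hasDerivAt (y : ℝ) : HasDerivAt Phi (phi y) y := by
  have h : ∀ z : ℝ, Phi z = Phi 0 + ∫ t in (0:ℝ)..z, phi t := by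
    intro z
    rw [Phi_eq, Phi_eq, ← intervalIntegral.integral_Iic_sub_Iic
      (phi_integrable.integrableOn) (phi_integrable.integrableOn)]
    ring
  have : HasDerivAt (fun z => Phi 0 + ∫ t in (0:ℝ)..z, phi t) (phi y) y := by
    refine HasDerivAt.const_add _ ?_
    exact intervalIntegral.integral_hasDerivAt_right
      (phi_integrable.intervalIntegrable)
      (phi_continuous.stronglyMeasurable.stronglyMeasurableAtFilter)
      (phi_continuous.continuousAt)
  exact this.congr_of_eventuallyEq (Eventually.of_forall fun z => h z)

lemma Phi_tendsto : Tendsto Phi atTop (nhds 1) := by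
  have h := MeasureTheory.tendsto_measure_Iic_atTop (ProbabilityTheory.gaussianReal 0 1)
  rw [measure_univ] at h
  have := (ENNReal.tendsto_toReal (by norm_num)).comp h
  have h2 : Tendsto (ENNReal.toReal ∘ fun x => (gaussianReal 0 1) (Iic x)) atTop (nhds 1) := by
    simpa using this
  exact h2

lemma phi_tendsto : Tendsto phi atTop (nhds 0) := by
  have h1 : Tendsto (fun x : ℝ => -x ^ 2 / 2) atTop atBot := by
    have h0 : Tendsto (fun x : ℝ => x ^ 2) atTop atTop := tendsto_pow_atTop two_ne_zero
    have hneg : Tendsto (fun x : ℝ => (-1:ℝ) * x ^ 2) atTop atBot :=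
      h0.const_mul_atTop_of_neg (by norm_num)
    have := hneg.atBot_div_const (show (0:ℝ) < 2 by norm_num)
    refine this.congr fun x => by ring
  have h2 := Real.tendsto_exp_atBot.comp h1
  have := h2.div_const (Real.sqrt (2 * Real.pi))
  have h3 : Tendsto (fun a => rexp (-a ^ 2 / 2) / √(2 * π)) atTop (nhds 0) := by
    simpa only [phi, Function.comp_def, zero_div] using this
  exact h3

lemma sqrt_facts (x : ℝ) : Real.sqrt (4 + x ^ 2) ^ 2 = 4 + x ^ 2 ∧
    x < Real.sqrt (4 + x ^ 2) ∧ 0 < Real.sqrt (4 + x ^ 2) + x := by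
  have h1 : (0:ℝ) ≤ 4 + x ^ 2 := by positivity
  have h2 : Real.sqrt (4 + x ^ 2) ^ 2 = 4 + x ^ 2 := Real.sq_sqrt h1
  have h3 : x < Real.sqrt (4 + x ^ 2) := by
    nlinarith [Real.sqrt_nonneg (4 + x ^ 2), sq_nonneg (Real.sqrt (4 + x ^ 2) - x)]
  refine ⟨h2, h3, ?_⟩
  nlinarith [Real.sqrt_nonneg (4 + x ^ 2), sq_nonneg (Real.sqrt (4 + x ^ 2) + x)]

lemma sqrt_hasDerivAt (x : ℝ) :
    HasDerivAt (fun y => Real.sqrt (4 + y ^ 2)) (x / Real.sqrt (4 + x ^ 2)) x := by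
  have h1 : HasDerivAt (fun y : ℝ => 4 + y ^ 2) (2 * x) x := by
    simpa using ((hasDerivAt_pow 2 x).const_add 4)
  have h2 : (4 + x ^ 2) ≠ 0 := by positivity
  have := (Real.hasDerivAt_sqrt h2).comp x h1
  refine this.congr_deriv ?_
  have hs : 0 < Real.sqrt (4 + x ^ 2) := Real.sqrt_pos.2 (by positivity)
  field_simp

lemma phi_hasDerivAt (x : ℝ) : HasDerivAt phi (-x * phi x) x := by
  have h1 : HasDerivAt (fun y : ℝ => -y ^ 2 / 2) (-x) x := by
    have := ((hasDerivAt_pow 2 x).neg).div_const 2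
    refine this.congr_deriv ?_
    ring
  have h2 := (Real.hasDerivAt_exp _).comp x h1
  have := h2.div_const (Real.sqrt (2 * Real.pi))
  refine this.congr_deriv ?_
  simp [phi]
  ring

/-- The function whose positivity is Birnbaum's bound. -/
noncomputable def gBirn (x : ℝ) : ℝ :=
  (1 - Phi x) - 2 * phi x / (Real.sqrt (4 + x ^ 2) + x)

lemma gBirn_hasDerivAt (x : ℝ) :
    HasDerivAt gBirn
      (-phi x - ((2 * (-x * phi x)) * (Real.sqrt (4 + x ^ 2) + x)
        - 2 * phi x * (x / Real.sqrt (4 + x ^ 2) + 1)) / (Real.sqrt (4 + x ^ 2) + x) ^ 2) x := by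
  obtain ⟨hs2, hxs, hsum⟩ := sqrt_facts x
  have hden : Real.sqrt (4 + x ^ 2) + x ≠ 0 := ne_of_gt hsum
  have h1 : HasDerivAt (fun y => 1 - Phi y) (-phi x) x := by
    simpa using (Phi_hasDerivAt x).const_sub 1
  have h2 : HasDerivAt (fun y => 2 * phi y) (2 * (-x * phi x)) x :=
    (phi_hasDerivAt x).const_mul 2
  have h3 : HasDerivAt (fun y => Real.sqrt (4 + y ^ 2) + y)
      (x / Real.sqrt (4 + x ^ 2) + 1) x :=
    (sqrt_hasDerivAt x).add (hasDerivAt_id x)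
  exact h1.sub (h2.div h3 hden)

lemma gBirn_deriv_neg (x : ℝ) : deriv gBirn x < 0 := by
  rw [(gBirn_hasDerivAt x).deriv]
  obtain ⟨hs2, hxs, hsum⟩ := sqrt_facts x
  set s := Real.sqrt (4 + x ^ 2) with hs
  have hs0 : 0 < s := Real.sqrt_pos.2 (by positivity)
  have hp := phi_pos x
  rw [sub_neg, lt_div_iff₀ (by positivity)]
  have hd : x / s * s = x := div_mul_cancel₀ x (ne_of_gt hs0)
  set d := x / s with hdd
  have key : (phi x * (s + x) ^ 2 - 2 * x * phi x * (s + x) - 2 * phi x * (d + 1)) * s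
      = 2 * phi x * (s - x) + phi x * s * (s ^ 2 - (4 + x ^ 2)) + 2 * phi x * (x - d * s) := by
    ring
  have h5 : 0 < (phi x * (s + x) ^ 2 - 2 * x * phi x * (s + x) - 2 * phi x * (d + 1)) * s := by
    rw [key, hs2, hd]
    have : 0 < 2 * phi x * (s - x) := by
      apply mul_pos (by linarith) (by linarith)
    linarith
  nlinarith [h5, hs0]

lemma gBirn_strictAnti : StrictAnti gBirn :=
  strictAnti_of_deriv_neg gBirn_deriv_neg

lemma gBirn_tendsto : Tendsto gBirn atTop (nhds 0) := by
  have h1 : Tendsto (fun x => 1 - Phi x) atTop (nhds 0) := by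
    have := Phi_tendsto.const_sub 1
    simpa using this
  have h2 : Tendsto (fun x => 2 * phi x / (Real.sqrt (4 + x ^ 2) + x)) atTop (nhds 0) := by
    have hb : ∀ᶠ x : ℝ in atTop, 2 * phi x / (Real.sqrt (4 + x ^ 2) + x) ≤ phi x := by
      filter_upwards [eventually_ge_atTop (0:ℝ)] with x hx
      obtain ⟨hs2, hxs, hsum⟩ := sqrt_facts x
      have hs2' : (2:ℝ) ≤ Real.sqrt (4 + x ^ 2) := by
        rw [show (2:ℝ) = Real.sqrt 4 by rw [show (4:ℝ) = 2^2 by norm_num, Real.sqrt_sq]; norm_num]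
        exact Real.sqrt_le_sqrt (by nlinarith)
      rw [div_le_iff₀ (by linarith)]
      nlinarith [phi_pos x]
    have ha : ∀ᶠ x : ℝ in atTop, 0 ≤ 2 * phi x / (Real.sqrt (4 + x ^ 2) + x) := by
      filter_upwards [eventually_ge_atTop (0:ℝ)] with x hx
      obtain ⟨hs2, hxs, hsum⟩ := sqrt_facts x
      exact div_nonneg (by nlinarith [phi_pos x]) hsum.le
    exact tendsto_of_tendsto_of_tendsto_of_le_of_le' tendsto_const_nhds phi_tendsto ha hb
  have := h1.sub h2
  have h4 : Tendsto (fun x => 1 - Phi x - 2 * phi x / (√(4 + x ^ 2) + x)) atTop (nhds 0) := by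
    simpa using this
  exact h4

/-- Birnbaum's (1942) lower bound on the Gaussian tail:
for every `x ≥ 0`, `1 − Φ(x) > 2·φ(x)/(√(4 + x²) + x)`. -/
theorem birnbaum_tail_bound (x : ℝ) (hx : 0 ≤ x) :
    2 * phi x / (Real.sqrt (4 + x ^ 2) + x) < 1 - Phi x := by
  have h1 : 0 ≤ gBirn (x + 1) := by
    refine le_of_tendsto gBirn_tendsto ?_
    filter_upwards [eventually_ge_atTop (x + 1)] with y hy
    exact gBirn_strictAnti.antitone hy
  have h2 : gBirn (x + 1) < gBirn x := gBirn_strictAnti (by linarith)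
  have : 0 < gBirn x := lt_of_le_of_lt h1 h2
  unfold gBirn at this
  linarith
end

section
/- Let a > 1 and b ∈ ℝ, and define f(x) = (1 − Φ(a·x + b)) / (1 − Φ(x)) for x ∈ ℝ. Then: (i) f(x) > 1 for x < −b/(a−1), f(−b/(a−1)) = 1, and f(x) < 1 for x > −b/(a−1); (ii) f(x) → 1 as x → −∞ and f(x) → 0 as x → +∞; (iii) f attains its maximum over ℝ, the maximum value is strictly greater than 1, and every maximizer lies in (−∞, −b/(a−1)). -/
open MeasureTheory Filter
open Topology

namespace TailRatioAux

open Set Real ProbabilityTheory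

noncomputable def pdf : ℝ → ℝ := gaussianPDFReal 0 1

lemma pdf_int : Integrable pdf := integrable_gaussianPDFReal 0 1

lemma pdf_pos (x : ℝ) : 0 < pdf x := gaussianPDFReal_pos 0 1 x one_ne_zero

lemma Phi_eq (x : ℝ) : Phi x = ∫ t in Iic x, pdf t := by
  rw [Phi, gaussianReal_apply_eq_integral 0 one_ne_zero, ENNReal.toReal_ofReal
    (setIntegral_nonneg measurableSet_Iic fun t _ => gaussianPDFReal_nonneg 0 1 t)]
  rfl

lemma pdf_total : ∫ t, pdf t = 1 := integral_gaussianPDFReal_eq_one 0 one_ne_zero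

lemma one_sub_Phi (x : ℝ) : 1 - Phi x = ∫ t in Ioi x, pdf t := by
  have h := intervalIntegral.integral_Iic_add_Ioi (μ := volume) (f := pdf) (b := x)
    pdf_int.integrableOn pdf_int.integrableOn
  rw [pdf_total] at h
  rw [Phi_eq]
  linarith

lemma Phi_sub (x y : ℝ) : Phi y - Phi x = ∫ t in x..y, pdf t := by
  rw [Phi_eq, Phi_eq]
  exact intervalIntegral.integral_Iic_sub_Iic pdf_int.integrableOn pdf_int.integrableOn

lemma Phi_lt {x y : ℝ} (h : x < y) : Phi x < Phi y := by
  have h1 := intervalIntegral.intervalIntegral_pos_of_pos (pdf_int.intervalIntegrable) pdf_pos h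
  have h2 := Phi_sub x y
  linarith

lemma Phi_lt_one (x : ℝ) : Phi x < 1 := by
  have a1 : Phi x < Phi (x + 1) := Phi_lt (by linarith)
  have a2 : 0 ≤ 1 - Phi (x + 1) := by
    rw [one_sub_Phi]
    exact setIntegral_nonneg measurableSet_Ioi fun t _ => (pdf_pos t).le
  linarith

lemma S_pos (x : ℝ) : 0 < 1 - Phi x := by linarith [Phi_lt_one x]

lemma Phi_cont : Continuous Phi := by
  have h : Phi = fun x => Phi 0 + ∫ t in (0:ℝ)..x, pdf t := by
    funext x
    have := Phi_sub 0 x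
    linarith
  rw [h]
  exact continuous_const.add (pdf_int.continuous_primitive 0)

lemma Phi_atTop : Tendsto Phi atTop (𝓝 1) := by
  have h : Tendsto (fun x : ℝ => ∫ t in (0:ℝ)..x, pdf t) atTop
      (𝓝 (∫ t in Ioi (0:ℝ), pdf t)) :=
    intervalIntegral_tendsto_integral_Ioi 0 pdf_int.integrableOn tendsto_id
  have h2 : (∫ t in Ioi (0:ℝ), pdf t) = 1 - Phi 0 := (one_sub_Phi 0).symm
  rw [h2] at h
  have h3 : Tendsto (fun x : ℝ => Phi 0 + ∫ t in (0:ℝ)..x, pdf t) atTop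
      (𝓝 (Phi 0 + (1 - Phi 0))) := tendsto_const_nhds.add h
  have h4 : Phi 0 + (1 - Phi 0) = 1 := by ring
  rw [h4] at h3
  exact h3.congr fun x => by have := Phi_sub 0 x; linarith

lemma Phi_atBot : Tendsto Phi atBot (𝓝 0) := by
  have h : Tendsto (fun x : ℝ => ∫ t in x..(0:ℝ), pdf t) atBot
      (𝓝 (∫ t in Iic (0:ℝ), pdf t)) :=
    intervalIntegral_tendsto_integral_Iic 0 pdf_int.integrableOn tendsto_id
  have h3 : Tendsto (fun x : ℝ => Phi 0 - ∫ t in x..(0:ℝ), pdf t) atBot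
      (𝓝 (Phi 0 - ∫ t in Iic (0:ℝ), pdf t)) := tendsto_const_nhds.sub h
  have h4 : Phi 0 - ∫ t in Iic (0:ℝ), pdf t = 0 := by rw [← Phi_eq]; ring
  rw [h4] at h3
  exact h3.congr fun x => by have := Phi_sub x 0; linarith

lemma pdf_shift_le {x d t : ℝ} (hd : 0 ≤ d) (ht : x ≤ t) :
    pdf (t + d) ≤ Real.exp (-(x * d)) * pdf t := by
  simp only [pdf, gaussianPDFReal, NNReal.coe_one, mul_one, sub_zero]
  rw [show Real.exp (-(x * d)) * ((Real.sqrt (2 * Real.pi))⁻¹ * Real.exp (-t ^ 2 / 2)) =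
      (Real.sqrt (2 * Real.pi))⁻¹ * (Real.exp (-(x * d)) * Real.exp (-t ^ 2 / 2)) by ring]
  refine mul_le_mul_of_nonneg_left ?_ (by positivity)
  rw [← Real.exp_add]
  refine Real.exp_le_exp.2 ?_
  nlinarith [mul_nonneg (sub_nonneg.2 ht) hd, sq_nonneg d]

lemma tail_shift (x d : ℝ) : 1 - Phi (x + d) = ∫ t in Ioi x, pdf (t + d) := by
  rw [one_sub_Phi]
  have hmp : MeasurePreserving (fun t : ℝ => t + d) volume volume :=
    measurePreserving_add_right volume d
  have hemb : MeasurableEmbedding (fun t : ℝ => t + d) :=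
    (MeasurableEquiv.addRight d).measurableEmbedding
  have hpre : (fun t : ℝ => t + d) ⁻¹' Ioi (x + d) = Ioi x := by
    ext t
    simp
  rw [← hmp.setIntegral_preimage_emb hemb pdf (Ioi (x + d)), hpre]

lemma tail_bound {x d : ℝ} (hd : 0 ≤ d) :
    1 - Phi (x + d) ≤ Real.exp (-(x * d)) * (1 - Phi x) := by
  rw [tail_shift, one_sub_Phi, ← integral_const_mul]
  have hmp : MeasurePreserving (fun t : ℝ => t + d) volume volume :=
    measurePreserving_add_right volume d
  have hint : Integrable (fun t : ℝ => pdf (t + d)) :=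
    (hmp.integrable_comp pdf_int.aestronglyMeasurable).2 pdf_int
  refine setIntegral_mono_on hint.integrableOn
    ((pdf_int.const_mul _).integrableOn) measurableSet_Ioi fun t ht => ?_
  exact pdf_shift_le hd (le_of_lt ht)

lemma exists_max {F : ℝ → ℝ} (hfc : Continuous F) (hBot : Tendsto F atBot (𝓝 1))
    (hTop : Tendsto F atTop (𝓝 0)) {x₁ : ℝ} (hx₁ : 1 < F x₁) :
    ∃ x₀ : ℝ, (∀ x, F x ≤ F x₀) ∧ 1 < F x₀ := by
  obtain ⟨lo, hlo⟩ := eventually_atBot.1 (hBot.eventually_lt_const hx₁)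
  obtain ⟨hi, hhi⟩ := eventually_atTop.1 (hTop.eventually_lt_const (by linarith : (0:ℝ) < F x₁))
  set A := min lo x₁ with hA
  set B := max hi x₁ with hB
  have hx₁mem : x₁ ∈ Icc A B := ⟨min_le_right _ _, le_max_right _ _⟩
  obtain ⟨x₀, hx₀mem, hx₀max⟩ :=
    isCompact_Icc.exists_isMaxOn ⟨x₁, hx₁mem⟩ hfc.continuousOn
  have hx₁le : F x₁ ≤ F x₀ := hx₀max hx₁mem
  refine ⟨x₀, fun x => ?_, by linarith⟩
  rcases le_or_gt A x with h1 | h1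
  · rcases le_or_gt x B with h2 | h2
    · exact hx₀max ⟨h1, h2⟩
    · have : F x < F x₁ := hhi x (le_of_lt (lt_of_le_of_lt (le_max_left _ _) h2))
      linarith
  · have : F x < F x₁ := hlo x (le_of_lt (lt_of_lt_of_le h1 (min_le_left _ _)))
    linarith

end TailRatioAux

open TailRatioAux Set Real in
/-- Properties of `f(x) = (1 − Φ(a·x + b))/(1 − Φ(x))` for `a > 1`:
(i) `f > 1` left of `−b/(a−1)`, `f = 1` there, `f < 1` right of it;
(ii) `f → 1` as `x → −∞` and `f → 0` as `x → +∞`;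
(iii) `f` attains a maximum `> 1`, and every maximizer lies in `(−∞, −b/(a−1))`. -/
theorem tail_ratio_properties (a b : ℝ) (ha : 1 < a) :
    (∀ x : ℝ, x < -b / (a - 1) → 1 < (1 - Phi (a * x + b)) / (1 - Phi x)) ∧
    (1 - Phi (a * (-b / (a - 1)) + b)) / (1 - Phi (-b / (a - 1))) = 1 ∧
    (∀ x : ℝ, -b / (a - 1) < x → (1 - Phi (a * x + b)) / (1 - Phi x) < 1) ∧
    Tendsto (fun x : ℝ => (1 - Phi (a * x + b)) / (1 - Phi x)) atBot (nhds 1) ∧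
    Tendsto (fun x : ℝ => (1 - Phi (a * x + b)) / (1 - Phi x)) atTop (nhds 0) ∧
    (∃ x₀ : ℝ,
      (∀ x : ℝ, (1 - Phi (a * x + b)) / (1 - Phi x)
          ≤ (1 - Phi (a * x₀ + b)) / (1 - Phi x₀)) ∧
      1 < (1 - Phi (a * x₀ + b)) / (1 - Phi x₀) ∧
      (∀ y : ℝ, (∀ x : ℝ, (1 - Phi (a * x + b)) / (1 - Phi x)
          ≤ (1 - Phi (a * y + b)) / (1 - Phi y)) → y < -b / (a - 1))) := by
  have ha' : (0:ℝ) < a - 1 := by linarith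
  -- part (i) left
  have hleft : ∀ x : ℝ, x < -b / (a - 1) → 1 < (1 - Phi (a * x + b)) / (1 - Phi x) := by
    intro x hx
    have hb' : x * (a - 1) < -b := (lt_div_iff₀ ha').1 hx
    have h2 : a * x + b < x := by nlinarith
    have h3 := Phi_lt h2
    exact (one_lt_div (S_pos x)).2 (by linarith)
  -- part (i) middle
  have hmid : (1 - Phi (a * (-b / (a - 1)) + b)) / (1 - Phi (-b / (a - 1))) = 1 := by
    have hc : a * (-b / (a - 1)) + b = -b / (a - 1) := by
      field_simp
      ring
    rw [hc, div_self (S_pos _).ne']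
  -- part (i) right
  have hright : ∀ x : ℝ, -b / (a - 1) < x → (1 - Phi (a * x + b)) / (1 - Phi x) < 1 := by
    intro x hx
    have hb' : -b < x * (a - 1) := (div_lt_iff₀ ha').1 hx
    have h2 : x < a * x + b := by nlinarith
    have h3 := Phi_lt h2
    exact (div_lt_one (S_pos x)).2 (by linarith)
  -- atBot
  have hcomp : Tendsto (fun x : ℝ => a * x + b) atBot atBot := by
    apply tendsto_atBot_add_const_right
    exact (tendsto_id.const_mul_atBot (by linarith : (0:ℝ) < a))
  have hBot : Tendsto (fun x : ℝ => (1 - Phi (a * x + b)) / (1 - Phi x)) atBot (nhds 1) := by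
    have hnum : Tendsto (fun x : ℝ => 1 - Phi (a * x + b)) atBot (nhds 1) := by
      have h := (Phi_atBot.comp hcomp).const_sub 1
      simpa using h
    have hden : Tendsto (fun x : ℝ => 1 - Phi x) atBot (nhds 1) := by
      have h := Phi_atBot.const_sub 1
      simpa using h
    have := hnum.div hden one_ne_zero
    rw [div_one] at this; exact this
  -- atTop
  have hTop : Tendsto (fun x : ℝ => (1 - Phi (a * x + b)) / (1 - Phi x)) atTop (nhds 0) := by
    have harg : Tendsto (fun x : ℝ => x * ((a - 1) * x + b)) atTop atTop := by
      apply tendsto_atTop_mono' atTop ?_ tendsto_id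
      filter_upwards [eventually_ge_atTop (1:ℝ), eventually_ge_atTop ((1 - b) / (a - 1))]
        with x h1 h2
      have h3 : 1 ≤ (a - 1) * x + b := by
        rw [div_le_iff₀ ha'] at h2
        nlinarith
      simp only [id]
      nlinarith
    have hexp : Tendsto (fun x : ℝ => Real.exp (-(x * ((a - 1) * x + b)))) atTop (nhds 0) :=
      Real.tendsto_exp_atBot.comp (tendsto_neg_atTop_atBot.comp harg)
    refine squeeze_zero' ?_ ?_ hexp
    · exact Eventually.of_forall fun x => (div_pos (S_pos _) (S_pos _)).le
    · filter_upwards [eventually_ge_atTop (0:ℝ), eventually_ge_atTop (-b / (a - 1))]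
        with x h1 h2
      have hd : 0 ≤ (a - 1) * x + b := by
        rw [div_le_iff₀ ha'] at h2
        nlinarith
      have heq : a * x + b = x + ((a - 1) * x + b) := by ring
      rw [heq, div_le_iff₀ (S_pos x)]
      exact tail_bound hd
  refine ⟨hleft, hmid, hright, hBot, hTop, ?_⟩
  -- part (iii)
  have hfc : Continuous (fun x : ℝ => (1 - Phi (a * x + b)) / (1 - Phi x)) := by
    refine Continuous.div ?_ ?_ (fun x => (S_pos x).ne')
    · exact continuous_const.sub (Phi_cont.comp (by continuity))
    · exact continuous_const.sub Phi_cont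
  have hx₁ : 1 < (1 - Phi (a * (-b / (a - 1) - 1) + b)) / (1 - Phi (-b / (a - 1) - 1)) :=
    hleft _ (by linarith)
  obtain ⟨x₀, hmax, hgt⟩ := exists_max hfc hBot hTop hx₁
  refine ⟨x₀, hmax, hgt, fun y hy => ?_⟩
  have hygt : 1 < (1 - Phi (a * y + b)) / (1 - Phi y) :=
    lt_of_lt_of_le hx₁ (hy _)
  by_contra hcon
  push_neg at hcon
  rcases eq_or_lt_of_le hcon with h | h
  · rw [h] at hmid
    linarith
  · linarith [hright y h]
end

section
/- For every a > 1, every b < 0, and every x ≥ 0, −(1/2)·((a−1)·x + b)·(√(4 + x²) + x) ≤ (4·(a−1)² + b²) / (4·(a−1)), with equality when x = (4(a−1)² − b²)/(2(a−1)b) (provided this value is nonnegative). -/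
/-- Maximization of `f₁(x) = −(1/2)((a−1)x + b)(√(4 + x²) + x)` for `a > 1`, `b < 0`:
for every `x ≥ 0`, `f₁(x) ≤ (4(a−1)² + b²)/(4(a−1))`, with equality when
`x = (4(a−1)² − b²)/(2(a−1)b)`, provided this value is nonnegative. -/
theorem f1_max (a b : ℝ) (ha : 1 < a) (hb : b < 0) :
    (∀ x : ℝ, 0 ≤ x →
      -(1 / 2) * ((a - 1) * x + b) * (Real.sqrt (4 + x ^ 2) + x)
        ≤ (4 * (a - 1) ^ 2 + b ^ 2) / (4 * (a - 1))) ∧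
    (0 ≤ (4 * (a - 1) ^ 2 - b ^ 2) / (2 * (a - 1) * b) →
      -(1 / 2) * ((a - 1) * ((4 * (a - 1) ^ 2 - b ^ 2) / (2 * (a - 1) * b)) + b) *
          (Real.sqrt (4 + ((4 * (a - 1) ^ 2 - b ^ 2) / (2 * (a - 1) * b)) ^ 2)
            + (4 * (a - 1) ^ 2 - b ^ 2) / (2 * (a - 1) * b))
        = (4 * (a - 1) ^ 2 + b ^ 2) / (4 * (a - 1))) := by
  have hc : (0:ℝ) < a - 1 := by linarith
  constructor
  · intro x hx
    have hs : Real.sqrt (4 + x ^ 2) ^ 2 = 4 + x ^ 2 :=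
      Real.sq_sqrt (by positivity)
    rw [le_div_iff₀ (by positivity : (0:ℝ) < 4 * (a - 1))]
    nlinarith [sq_nonneg ((a - 1) * (Real.sqrt (4 + x ^ 2) + x) + b), hs]
  · intro _
    set x₀ : ℝ := (4 * (a - 1) ^ 2 - b ^ 2) / (2 * (a - 1) * b) with hx₀
    have hcb : 2 * (a - 1) * b ≠ 0 := by
      intro h; nlinarith
    have hsqrt : Real.sqrt (4 + x₀ ^ 2) = -((4 * (a - 1) ^ 2 + b ^ 2) / (2 * (a - 1) * b)) := by
      rw [show 4 + x₀ ^ 2 = (-((4 * (a - 1) ^ 2 + b ^ 2) / (2 * (a - 1) * b))) ^ 2 by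
        rw [hx₀]; field_simp [hb.ne]; ring]
      apply Real.sqrt_sq
      have h1 : 2 * (a - 1) * b < 0 := by nlinarith
      have h2 : 0 < 4 * (a - 1) ^ 2 + b ^ 2 := by positivity
      exact le_of_lt (neg_pos.mpr (div_neg_of_pos_of_neg h2 h1))
    rw [hsqrt, hx₀]
    field_simp [hb.ne]
    ring
end
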